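/- Assume the invariant setting with S_A ≠ ∅ and S_B ≠ ∅, and write p_A = max S_A and p_B = max S_B. Assume p_A ≤ a_A and a_B < p_B < p_A (case 6 of the case analysis). Then: S'_A = S_A \ {p_A}; S'_B = (S_B \ {p_B}) ∪ {a_B}; p_B is the B-side peek, i.e. p_B = min((L_B ∪ {a_B}) \ S'_B), and p_B is less than every element of (L_A \ {a_A}) \ S'_A; and H_h(L') = (H_h(L_A ∪ L_B) \ {p_A}) ∪ {a_B} = S'_A ∪ S'_B ∪ {p_B}. -/

import Mathlib

/-- `smallSet m L` is `H_m(L)`: the set of the `m` smallest elements of the finset `L`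
(the first `m` entries of the increasing enumeration of `L`). -/
def smallSet {α : Type*} [LinearOrder α] (m : ℕ) (L : Finset α) : Finset α :=
  ((L.sort (· ≤ ·)).take m).toFinset

section Aux
variable {α : Type*} [LinearOrder α]

lemma smallSet_subset (m : ℕ) (L : Finset α) : smallSet m L ⊆ L := by
  intro x hx
  rw [smallSet, List.mem_toFinset] at hx
  exact (Finset.mem_sort _).1 (List.mem_of_mem_take hx)

lemma card_smallSet (m : ℕ) (L : Finset α) : (smallSet m L).card = min m L.card := by
  rw [smallSet, List.toFinset_card_of_nodup ((L.sort_nodup _).sublist (List.take_sublist _ _)),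
    List.length_take, Finset.length_sort]

lemma smallSet_lt {m : ℕ} {L : Finset α} {x y : α} (hx : x ∈ smallSet m L)
    (hy : y ∈ L) (hy2 : y ∉ smallSet m L) : x < y := by
  have hs := L.sortedLT_sort.pairwise
  rw [smallSet, List.mem_toFinset] at hx hy2
  rw [← Finset.mem_sort (α := α) (· ≤ ·), ← List.take_append_drop m (L.sort (· ≤ ·)),
    List.mem_append] at hy
  have hyd : y ∈ (L.sort (· ≤ ·)).drop m := hy.resolve_left hy2
  have hp : ((L.sort (· ≤ ·)).take m ++ (L.sort (· ≤ ·)).drop m).Pairwise (· < ·) := by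
    rw [List.take_append_drop]; exact hs
  exact (List.pairwise_append.mp hp).2.2 x hx y hyd

lemma eq_smallSet {m : ℕ} {L S : Finset α} (hSL : S ⊆ L)
    (hc : S.card = min m L.card)
    (hlt : ∀ x ∈ S, ∀ y ∈ L, y ∉ S → x < y) : smallSet m L = S := by
  have hcc : (smallSet m L).card = S.card := by rw [card_smallSet, hc]
  have hsub : S ⊆ smallSet m L := by
    intro x hx
    by_contra hxT
    have hTS : smallSet m L ⊆ S := by
      intro t ht
      by_contra htS
      exact absurd ((hlt x hx t (smallSet_subset m L ht) htS).trans
        (smallSet_lt ht (hSL hx) hxT)) (lt_irrefl x)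
    have := Finset.card_lt_card ((Finset.ssubset_iff_of_subset hTS).2 ⟨x, hx, hxT⟩)
    omega
  exact (Finset.eq_of_subset_of_card_le hsub (le_of_eq hcc)).symm

end Aux

/-- case 6 of the case analysis.  Invariant setting: `L_A, L_B` disjoint
with `|L_A| + |L_B| = 2h+1`, `S_A ⊆ L_A`, `S_B ⊆ L_B`, `S_A ∪ S_B = H_h(L_A ∪ L_B)`,
`a_A ∈ L_A`, `a_B ∉ L_A ∪ L_B`; `L' = (L_A \ {a_A}) ∪ L_B ∪ {a_B}`; updated small sets
`S'_A = H_{|S_A|-1}(L_A \ {a_A})` and `S'_B = H_{|S_B|}(L_B ∪ {a_B})`.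
Assume `S_A ≠ ∅`, `S_B ≠ ∅`, `p_A = max S_A ≤ a_A`, and `a_B < p_B = max S_B < p_A`.
Then `S'_A = S_A \ {p_A}`, `S'_B = (S_B \ {p_B}) ∪ {a_B}`, `p_B` is the B-side peek
(`p_B = min((L_B ∪ {a_B}) \ S'_B)`) and is less than every element of
`(L_A \ {a_A}) \ S'_A`, and
`H_h(L') = (H_h(L_A ∪ L_B) \ {p_A}) ∪ {a_B} = S'_A ∪ S'_B ∪ {p_B}`. -/
theorem invariant_case6 {α : Type*} [LinearOrder α] (h : ℕ)
    (LA LB SA SB : Finset α) (hdisj : Disjoint LA LB)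
    (hcard : LA.card + LB.card = 2 * h + 1)
    (hSA : SA ⊆ LA) (hSB : SB ⊆ LB)
    (hinv : SA ∪ SB = smallSet h (LA ∪ LB))
    (aA aB : α) (haA : aA ∈ LA) (haB : aB ∉ LA ∪ LB)
    (hSAne : SA.Nonempty) (hSBne : SB.Nonempty)
    (h1 : SA.max' hSAne ≤ aA)
    (h2 : aB < SB.max' hSBne)
    (h3 : SB.max' hSBne < SA.max' hSAne) :
    smallSet (SA.card - 1) (LA \ {aA}) = SA \ {SA.max' hSAne} ∧
    smallSet SB.card (LB ∪ {aB}) = (SB \ {SB.max' hSBne}) ∪ {aB} ∧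
    ((LB ∪ {aB}) \ smallSet SB.card (LB ∪ {aB})).min = (SB.max' hSBne : WithTop α) ∧
    (∀ x ∈ (LA \ {aA}) \ smallSet (SA.card - 1) (LA \ {aA}), SB.max' hSBne < x) ∧
    smallSet h ((LA \ {aA}) ∪ LB ∪ {aB}) =
      (smallSet h (LA ∪ LB) \ {SA.max' hSAne}) ∪ {aB} ∧
    smallSet h ((LA \ {aA}) ∪ LB ∪ {aB}) =
      smallSet (SA.card - 1) (LA \ {aA}) ∪ smallSet SB.card (LB ∪ {aB}) ∪
        {SB.max' hSBne} := by
  set pA := SA.max' hSAne with hpAdef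
  set pB := SB.max' hSBne with hpBdef
  have hpA : pA ∈ SA := SA.max'_mem hSAne
  have hpB : pB ∈ SB := SB.max'_mem hSBne
  have haBA : aB ∉ LA := fun hx => haB (Finset.mem_union_left _ hx)
  have haBB : aB ∉ LB := fun hx => haB (Finset.mem_union_right _ hx)
  have hLL : (LA ∪ LB).card = 2 * h + 1 := by
    rw [Finset.card_union_of_disjoint hdisj]; exact hcard
  have hSAcard : SA.card ≤ LA.card := Finset.card_le_card hSA
  have hSBcard : SB.card ≤ LB.card := Finset.card_le_card hSB
  have hdisjS : Disjoint SA SB := hdisj.mono hSA hSB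
  have hHcard : SA.card + SB.card = h := by
    have := Finset.card_union_of_disjoint hdisjS
    rw [hinv, card_smallSet, hLL] at this
    omega
  -- downward property of H = SA ∪ SB
  have hHlt : ∀ x ∈ SA ∪ SB, ∀ y ∈ LA ∪ LB, y ∉ SA ∪ SB → x < y := by
    intro x hx y hy hy2
    rw [hinv] at hx hy2
    exact smallSet_lt hx hy hy2
  -- y in LA but not SA is outside H; likewise for B
  have houtA : ∀ y ∈ LA, y ∉ SA → y ∉ SA ∪ SB := by
    intro y hy hy2 hc
    rcases Finset.mem_union.1 hc with hc | hc
    · exact hy2 hc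
    · exact (Finset.disjoint_left.1 hdisj hy) (hSB hc)
  have houtB : ∀ y ∈ LB, y ∉ SB → y ∉ SA ∪ SB := by
    intro y hy hy2 hc
    rcases Finset.mem_union.1 hc with hc | hc
    · exact (Finset.disjoint_right.1 hdisj hy) (hSA hc)
    · exact hy2 hc
  have haBS : aB ∉ SB := fun hx => haBB (hSB hx)
  have hpBne : pB ≠ pA := ne_of_lt h3
  have hpASB : pA ∉ SB := fun hx => absurd (SB.le_max' _ hx) (not_le.2 h3)
  -- Part 1
  have e1 : smallSet (SA.card - 1) (LA \ {aA}) = SA \ {pA} := by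
    apply eq_smallSet
    · intro x hx
      rw [Finset.mem_sdiff, Finset.mem_singleton] at hx ⊢
      refine ⟨hSA hx.1, fun hxa => hx.2 ?_⟩
      exact le_antisymm (SA.le_max' _ hx.1) (hxa ▸ h1)
    · have c1 : (SA \ {pA}).card = SA.card - 1 := by
        rw [Finset.card_sdiff_of_subset (Finset.singleton_subset_iff.2 hpA), Finset.card_singleton]
      have c2 : (LA \ {aA}).card = LA.card - 1 := by
        rw [Finset.card_sdiff_of_subset (Finset.singleton_subset_iff.2 haA), Finset.card_singleton]
      rw [c1, c2]
      omega
    · intro x hx y hy hy2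
      rw [Finset.mem_sdiff, Finset.mem_singleton] at hx hy hy2
      push_neg at hy2
      by_cases hypa : y = pA
      · subst hypa
        exact lt_of_le_of_ne (SA.le_max' _ hx.1) hx.2
      · have hyS : y ∉ SA := fun hc => hypa (hy2 hc)
        exact hHlt x (Finset.mem_union_left _ hx.1) y (Finset.mem_union_left _ hy.1)
          (houtA y hy.1 hyS)
  -- Part 2
  have e2 : smallSet SB.card (LB ∪ {aB}) = (SB \ {pB}) ∪ {aB} := by
    apply eq_smallSet
    · intro x hx
      rcases Finset.mem_union.1 hx with hx | hx
      · exact Finset.mem_union_left _ (hSB (Finset.mem_sdiff.1 hx).1)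
      · exact Finset.mem_union_right _ hx
    · have hd : Disjoint (SB \ {pB}) ({aB} : Finset α) := by
        simp only [Finset.disjoint_singleton_right, Finset.mem_sdiff]
        exact fun hc => haBS hc.1
      rw [Finset.card_union_of_disjoint hd,
        Finset.card_sdiff_of_subset (Finset.singleton_subset_iff.2 hpB),
        Finset.card_union_of_disjoint (by simpa using haBB),
        Finset.card_singleton, Finset.card_singleton]
      have : 1 ≤ SB.card := Finset.card_pos.2 hSBne
      omega
    · intro x hx y hy hy2
      have hyaB : y ≠ aB := fun hc => hy2 (Finset.mem_union_right _ (by simp [hc]))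
      have hyB : y ∈ LB := by
        rcases Finset.mem_union.1 hy with hy | hy
        · exact hy
        · exact absurd (Finset.mem_singleton.1 hy) hyaB
      by_cases hypb : y = pB
      · subst hypb
        rcases Finset.mem_union.1 hx with hx | hx
        · rw [Finset.mem_sdiff, Finset.mem_singleton] at hx
          exact lt_of_le_of_ne (SB.le_max' _ hx.1) hx.2
        · rw [Finset.mem_singleton.1 hx]; exact h2
      · have hyS : y ∉ SB := by
          intro hc
          exact hy2 (Finset.mem_union_left _ (Finset.mem_sdiff.2 ⟨hc, by simpa using hypb⟩))
        have hyout := houtB y hyB hyS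
        have hpBy : pB < y := hHlt pB (Finset.mem_union_right _ hpB) y
          (Finset.mem_union_right _ hyB) hyout
        rcases Finset.mem_union.1 hx with hx | hx
        · exact hHlt x (Finset.mem_union_right _ (Finset.mem_sdiff.1 hx).1) y
            (Finset.mem_union_right _ hyB) hyout
        · rw [Finset.mem_singleton.1 hx]; exact h2.trans hpBy
  -- Part 3
  have e3 : ((LB ∪ {aB}) \ smallSet SB.card (LB ∪ {aB})).min = (pB : WithTop α) := by
    rw [e2]
    have hmem : pB ∈ (LB ∪ {aB}) \ ((SB \ {pB}) ∪ {aB}) := by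
      rw [Finset.mem_sdiff]
      refine ⟨Finset.mem_union_left _ (hSB hpB), fun hc => ?_⟩
      rcases Finset.mem_union.1 hc with hc | hc
      · exact (Finset.mem_sdiff.1 hc).2 (Finset.mem_singleton.2 rfl)
      · exact absurd (Finset.mem_singleton.1 hc) (ne_of_gt h2)
    apply le_antisymm
    · exact Finset.min_le hmem
    · apply Finset.le_min
      intro y hy
      rw [Finset.mem_sdiff] at hy
      have hyaB : y ≠ aB := by
        intro hc; exact hy.2 (Finset.mem_union_right _ (by simp [hc]))
      have hyB : y ∈ LB := by
        rcases Finset.mem_union.1 hy.1 with h' | h'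
        · exact h'
        · exact absurd (Finset.mem_singleton.1 h') hyaB
      by_cases hypb : y = pB
      · simp [hypb]
      · have hyS : y ∉ SB := fun hc =>
          hy.2 (Finset.mem_union_left _ (Finset.mem_sdiff.2 ⟨hc, by simpa using hypb⟩))
        have := hHlt pB (Finset.mem_union_right _ hpB) y (Finset.mem_union_right _ hyB)
          (houtB y hyB hyS)
        exact_mod_cast this.le
  -- Part 4
  have e4 : ∀ x ∈ (LA \ {aA}) \ smallSet (SA.card - 1) (LA \ {aA}), pB < x := by
    intro x hx
    rw [e1, Finset.mem_sdiff, Finset.mem_sdiff, Finset.mem_singleton] at hx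
    obtain ⟨⟨hxA, hxaA⟩, hxS⟩ := hx
    rw [Finset.mem_sdiff, Finset.mem_singleton] at hxS
    push_neg at hxS
    by_cases hxpa : x = pA
    · rw [hxpa]; exact h3
    · have hxSA : x ∉ SA := fun hc => hxpa (hxS hc)
      exact hHlt pB (Finset.mem_union_right _ hpB) x (Finset.mem_union_left _ hxA)
        (houtA x hxA hxSA)
  -- Part 5
  have e5 : smallSet h ((LA \ {aA}) ∪ LB ∪ {aB}) =
      (smallSet h (LA ∪ LB) \ {pA}) ∪ {aB} := by
    rw [← hinv]
    apply eq_smallSet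
    · intro x hx
      rcases Finset.mem_union.1 hx with hx | hx
      · rw [Finset.mem_sdiff, Finset.mem_singleton] at hx
        rcases Finset.mem_union.1 hx.1 with hxa | hxb
        · refine Finset.mem_union_left _ (Finset.mem_union_left _ ?_)
          rw [Finset.mem_sdiff, Finset.mem_singleton]
          refine ⟨hSA hxa, fun hc => hx.2 ?_⟩
          exact le_antisymm (SA.le_max' _ hxa) (hc ▸ h1)
        · exact Finset.mem_union_left _ (Finset.mem_union_right _ (hSB hxb))
      · exact Finset.mem_union_right _ hx
    · have hd1 : Disjoint (LA \ {aA}) LB := hdisj.mono_left (Finset.sdiff_subset)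
      have hd2 : Disjoint ((LA \ {aA}) ∪ LB) ({aB} : Finset α) := by
        simp only [Finset.disjoint_singleton_right, Finset.mem_union, Finset.mem_sdiff]
        push_neg
        exact ⟨fun hc => absurd hc haBA, haBB⟩
      have hd3 : Disjoint ((SA ∪ SB) \ {pA}) ({aB} : Finset α) := by
        simp only [Finset.disjoint_singleton_right, Finset.mem_sdiff, Finset.mem_union]
        rintro ⟨hc | hc, -⟩
        · exact haBA (hSA hc)
        · exact haBB (hSB hc)
      have hpAH : pA ∈ SA ∪ SB := Finset.mem_union_left _ hpA
      have c1 : ((SA ∪ SB) \ {pA}).card = h - 1 := by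
        rw [Finset.card_sdiff_of_subset (Finset.singleton_subset_iff.2 hpAH), Finset.card_singleton,
          Finset.card_union_of_disjoint hdisjS, hHcard]
      have hh1 : 1 ≤ h := by
        have := Finset.card_pos.2 hSAne
        omega
      rw [Finset.card_union_of_disjoint hd3, c1, Finset.card_singleton,
        Finset.card_union_of_disjoint hd2, Finset.card_union_of_disjoint hd1,
        Finset.card_sdiff_of_subset (Finset.singleton_subset_iff.2 haA), Finset.card_singleton,
        Finset.card_singleton]
      have : 1 ≤ LA.card := Finset.card_pos.2 ⟨aA, haA⟩
      omega
    · intro x hx y hy hy2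
      have hyaB : y ≠ aB := fun hc => hy2 (Finset.mem_union_right _ (by simp [hc]))
      have hyL : y ∈ LA ∪ LB := by
        rcases Finset.mem_union.1 hy with hy' | hy'
        · rcases Finset.mem_union.1 hy' with h' | h'
          · exact Finset.mem_union_left _ (Finset.mem_sdiff.1 h').1
          · exact Finset.mem_union_right _ h'
        · exact absurd (Finset.mem_singleton.1 hy') hyaB
      have hxlepa : ∀ z, z ∈ (SA ∪ SB) \ {pA} ∪ {aB} → z < pA := by
        intro z hz
        rcases Finset.mem_union.1 hz with hz | hz
        · rw [Finset.mem_sdiff, Finset.mem_singleton] at hz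
          rcases Finset.mem_union.1 hz.1 with h' | h'
          · exact lt_of_le_of_ne (SA.le_max' _ h') hz.2
          · exact lt_of_le_of_lt (SB.le_max' _ h') h3
        · rw [Finset.mem_singleton.1 hz]; exact h2.trans h3
      by_cases hypa : y = pA
      · subst hypa; exact hxlepa x hx
      · have hyH : y ∉ SA ∪ SB := by
          intro hc
          apply hy2
          exact Finset.mem_union_left _ (Finset.mem_sdiff.2 ⟨hc, by simpa using hypa⟩)
        rcases Finset.mem_union.1 hx with hx' | hx'
        · exact hHlt x (Finset.sdiff_subset hx') y hyL hyH
        · rw [Finset.mem_singleton.1 hx']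
          exact h2.trans (hHlt pB (Finset.mem_union_right _ hpB) y hyL hyH)
  -- Part 6
  have e6 : smallSet h ((LA \ {aA}) ∪ LB ∪ {aB}) =
      smallSet (SA.card - 1) (LA \ {aA}) ∪ smallSet SB.card (LB ∪ {aB}) ∪ {pB} := by
    rw [e5, e1, e2, ← hinv]
    ext x
    simp only [Finset.mem_union, Finset.mem_sdiff, Finset.mem_singleton]
    constructor
    · rintro (⟨hx | hx, hne⟩ | rfl)
      · exact Or.inl (Or.inl ⟨hx, hne⟩)
      · by_cases hxp : x = pB
        · exact Or.inr hxp
        · exact Or.inl (Or.inr (Or.inl ⟨hx, hxp⟩))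
      · exact Or.inl (Or.inr (Or.inr rfl))
    · rintro ((⟨hx, hne⟩ | (⟨hx, hne⟩ | rfl)) | rfl)
      · exact Or.inl ⟨Or.inl hx, hne⟩
      · refine Or.inl ⟨Or.inr hx, fun hc => hpASB (hc ▸ hx)⟩
      · exact Or.inr rfl
      · exact Or.inl ⟨Or.inr hpB, hpBne⟩
  exact ⟨e1, e2, e3, e4, e5, e6⟩
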